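/- Let H be a complex Hilbert space, A a bounded self-adjoint operator on H with A ≥ 0, and let κ > 0, γ > 0. Then for every z ∈ ℂ with Re z = −κ + γ·|Im z|, the operator z·I − A is boundedly invertible, and one has the operator-norm bounds ‖A ∘ (z·I − A)⁻¹‖ ≤ √(1+γ²) and ‖A^{1/2} ∘ (z·I − A)⁻¹‖ ≤ √((1+γ²)/κ), where A^{1/2} denotes the positive square root of A. -/

import Mathlib

open ContinuousLinearMap

private lemma contour_key {κ γ : ℝ} (hκ : 0 < κ) (hγ : 0 < γ) {z : ℂ}
    (hz : z.re = -κ + γ * |z.im|) {t : ℝ} (ht : 0 ≤ t) :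
    (t + κ) ^ 2 ≤ (1 + γ ^ 2) * ‖z - (t : ℂ)‖ ^ 2 := by
  have h1 : ‖z - (t : ℂ)‖ ^ 2 = (z.re - t) ^ 2 + z.im ^ 2 := by
    rw [Complex.sq_norm, Complex.normSq_apply]
    simp only [Complex.sub_re, Complex.sub_im, Complex.ofReal_re, Complex.ofReal_im, sub_zero]
    ring
  have h3 : (z.re - t) ^ 2 = ((t + κ) - γ * |z.im|) ^ 2 := by rw [hz]; ring
  rw [h1, h3, ← sq_abs z.im]
  nlinarith [sq_nonneg (γ * (t + κ) - (1 + γ ^ 2) * |z.im|)]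

/-- For a nonnegative bounded self-adjoint operator `A` on a complex Hilbert space and
`z` on the contour `Re z = -κ + γ|Im z|` (κ, γ > 0), the operator `z•1 - A` is boundedly
invertible, with `‖A (z - A)⁻¹‖ ≤ √(1+γ²)` and `‖A^{1/2} (z - A)⁻¹‖ ≤ √((1+γ²)/κ)`.
Here `sqrtA` is the positive square root of `A`, characterized by `sqrtA.IsPositive`
and `sqrtA * sqrtA = A`. -/
theorem operator_resolvent_estimates_on_contour
    {H : Type*} [NormedAddCommGroup H] [InnerProductSpace ℂ H] [CompleteSpace H]
    (A sqrtA : H →L[ℂ] H) (hA : A.IsPositive)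
    (hsqrt : sqrtA.IsPositive) (hsqrt2 : sqrtA * sqrtA = A)
    (κ γ : ℝ) (hκ : 0 < κ) (hγ : 0 < γ)
    (z : ℂ) (hz : z.re = -κ + γ * |z.im|) :
    IsUnit (z • (1 : H →L[ℂ] H) - A) ∧
    ‖A * Ring.inverse (z • (1 : H →L[ℂ] H) - A)‖ ≤ Real.sqrt (1 + γ ^ 2) ∧
    ‖sqrtA * Ring.inverse (z • (1 : H →L[ℂ] H) - A)‖ ≤ Real.sqrt ((1 + γ ^ 2) / κ) := by
  have hsa : IsSelfAdjoint A := hA.isSelfAdjoint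
  have hsn : IsStarNormal A := hsa.isStarNormal
  have hA0 : (0 : H →L[ℂ] H) ≤ A := (ContinuousLinearMap.nonneg_iff_isPositive A).2 hA
  -- every element of the complex spectrum is a nonnegative real
  have hspec : ∀ x ∈ spectrum ℂ A, ∃ t : ℝ, 0 ≤ t ∧ x = (t : ℂ) := by
    intro x hx
    have hre : x = (x.re : ℂ) :=
      SpectrumRestricts.real_iff.mp (IsSelfAdjoint.spectrumRestricts hsa) x hx
    refine ⟨x.re, ?_, hre⟩
    have hx' : (algebraMap ℝ ℂ) x.re ∈ spectrum ℂ A := by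
      simpa [← hre] using hx
    exact spectrum_nonneg_of_nonneg hA0 ((spectrum.algebraMap_mem_iff ℂ).mp hx')
  -- z is never equal to a spectral point
  have hne : ∀ x ∈ spectrum ℂ A, z - x ≠ 0 := by
    intro x hx h0
    obtain ⟨t, ht, rfl⟩ := hspec x hx
    have hzt : z = (t : ℂ) := by linear_combination h0
    rw [hzt] at hz
    simp only [Complex.ofReal_re, Complex.ofReal_im, abs_zero, mul_zero] at hz
    nlinarith
  set g : ℂ → ℂ := fun x => (z - x)⁻¹ with hg
  have hcont : ContinuousOn g (spectrum ℂ A) := by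
    apply ContinuousOn.inv₀
    · fun_prop
    · exact hne
  have hcontz : ContinuousOn (fun x : ℂ => z - x) (spectrum ℂ A) := by fun_prop
  have hcontid : ContinuousOn (fun x : ℂ => x) (spectrum ℂ A) := continuousOn_id
  have hT : cfc (fun x : ℂ => z - x) A = z • (1 : H →L[ℂ] H) - A := by
    rw [cfc_sub (fun _ : ℂ => z) (fun x : ℂ => x) A (by fun_prop) hcontid,
      cfc_const z A, cfc_id' ℂ A, Algebra.algebraMap_eq_smul_one]
  have hone : cfc (fun x : ℂ => (z - x) * g x) A = 1 := by
    rw [cfc_congr (g := fun _ : ℂ => 1) (fun x hx => mul_inv_cancel₀ (hne x hx)),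
      cfc_const (1 : ℂ) A, map_one]
  have hTR : (z • (1 : H →L[ℂ] H) - A) * cfc g A = 1 := by
    rw [← hT, ← cfc_mul _ _ A hcontz hcont, hone]
  have hRT : cfc g A * (z • (1 : H →L[ℂ] H) - A) = 1 := by
    rw [← hT, ← cfc_mul _ _ A hcont hcontz,
      cfc_congr (g := fun x : ℂ => (z - x) * g x) (fun x _ => mul_comm _ _), hone]
  set u : (H →L[ℂ] H)ˣ := ⟨z • (1 : H →L[ℂ] H) - A, cfc g A, hTR, hRT⟩ with hu
  have hunit : IsUnit (z • (1 : H →L[ℂ] H) - A) := ⟨u, rfl⟩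
  have hinv : Ring.inverse (z • (1 : H →L[ℂ] H) - A) = cfc g A := Ring.inverse_unit u
  have hAg : cfc (fun x : ℂ => x * g x) A = A * cfc g A := by
    rw [cfc_mul (fun x : ℂ => x) g A hcontid hcont]
    congr 1
    exact cfc_id' ℂ A
  have hgt : ∀ t : ℝ, ‖g (t : ℂ)‖ = ‖z - (t : ℂ)‖⁻¹ := fun t => by
    simp [hg]
  refine ⟨hunit, ?_, ?_⟩
  · -- first bound
    rw [hinv, ← hAg]
    apply norm_cfc_le (Real.sqrt_nonneg _)
    intro x hx
    obtain ⟨t, ht, rfl⟩ := hspec x hx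
    have hk := contour_key hκ hγ hz ht
    have hnz : ‖z - (t : ℂ)‖ ≠ 0 := norm_ne_zero_iff.mpr (hne _ hx)
    have hn0 : 0 < ‖z - (t : ℂ)‖ := lt_of_le_of_ne (norm_nonneg _) (Ne.symm hnz)
    have hval : ‖(t : ℂ) * g (t : ℂ)‖ = t / ‖z - (t : ℂ)‖ := by
      rw [norm_mul, hgt, Complex.norm_real, Real.norm_eq_abs, abs_of_nonneg ht,
        div_eq_mul_inv]
    rw [hval, div_le_iff₀ hn0]
    calc t = Real.sqrt (t ^ 2) := (Real.sqrt_sq ht).symm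
      _ ≤ Real.sqrt ((1 + γ ^ 2) * ‖z - (t : ℂ)‖ ^ 2) :=
          Real.sqrt_le_sqrt (by nlinarith)
      _ = Real.sqrt (1 + γ ^ 2) * ‖z - (t : ℂ)‖ := by
          rw [Real.sqrt_mul (by positivity), Real.sqrt_sq (norm_nonneg _)]
  · -- second bound, via the C*-identity
    rw [hinv]
    set S : H →L[ℂ] H := sqrtA * cfc g A with hS
    have h1 : star S * S = star (cfc g A) * (A * cfc g A) := by
      rw [hS, star_mul, hsqrt.isSelfAdjoint.star_eq, mul_assoc, ← mul_assoc sqrtA, hsqrt2]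
    have h2 : cfc (fun x : ℂ => star (g x) * (x * g x)) A
        = star (cfc g A) * (A * cfc g A) := by
      rw [cfc_mul (fun x : ℂ => star (g x)) (fun x : ℂ => x * g x) A hcont.star
        (hcontid.mul hcont), cfc_star, hAg]
    have hstar : star S * S = cfc (fun x : ℂ => star (g x) * (x * g x)) A :=
      h1.trans h2.symm
    have hbound : ‖star S * S‖ ≤ (1 + γ ^ 2) / κ := by
      rw [hstar]
      apply norm_cfc_le (by positivity)
      intro x hx
      obtain ⟨t, ht, rfl⟩ := hspec x hx
      have hk := contour_key hκ hγ hz ht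
      have hnz : ‖z - (t : ℂ)‖ ≠ 0 := norm_ne_zero_iff.mpr (hne _ hx)
      have hn0 : 0 < ‖z - (t : ℂ)‖ := lt_of_le_of_ne (norm_nonneg _) (Ne.symm hnz)
      have hval : ‖star (g (t : ℂ)) * ((t : ℂ) * g (t : ℂ))‖ = t / ‖z - (t : ℂ)‖ ^ 2 := by
        rw [norm_mul, norm_star, norm_mul, hgt, Complex.norm_real, Real.norm_eq_abs,
          abs_of_nonneg ht]
        field_simp
      rw [hval, div_le_div_iff₀ (by positivity) hκ]
      nlinarith
    have hSnorm : ‖S‖ ^ 2 ≤ (1 + γ ^ 2) / κ := by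
      calc ‖S‖ ^ 2 = ‖star S * S‖ := by rw [CStarRing.norm_star_mul_self, sq]
        _ ≤ (1 + γ ^ 2) / κ := hbound
    calc ‖S‖ = Real.sqrt (‖S‖ ^ 2) := (Real.sqrt_sq (norm_nonneg _)).symm
      _ ≤ Real.sqrt ((1 + γ ^ 2) / κ) := Real.sqrt_le_sqrt hSnorm
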